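/- For integers n > 1 and a ≠ b positive integers, the complete bipartite graph satisfies χ_ld(K_{a,b}[\overline{K_n}]) = 2. -/

import Mathlib

open Finset

open Classical in
/-- The weight of a vertex: sum of labels of its neighbors. -/
noncomputable def ldWeight {V : Type*} (G : SimpleGraph V) [Fintype V] (f : V → ℕ) (v : V) : ℕ :=
  ∑ x ∈ Finset.univ, if G.Adj v x then f x else 0

/-- `f` is a local distance antimagic labeling of `G`: a bijection onto `{1,…,|V|}`
with adjacent vertices getting distinct weights. -/
def IsLDAL {V : Type*} (G : SimpleGraph V) [Fintype V] (f : V → ℕ) : Prop :=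
  Set.BijOn f Set.univ (Set.Icc 1 (Fintype.card V)) ∧
    ∀ ⦃u v : V⦄, G.Adj u v → ldWeight G f u ≠ ldWeight G f v

/-- The local distance antimagic chromatic number: minimum number of distinct weights. -/
noncomputable def chiLD {V : Type*} (G : SimpleGraph V) [Fintype V] : ℕ :=
  sInf {k | ∃ f : V → ℕ, IsLDAL G f ∧ (Finset.univ.image (ldWeight G f)).card = k}

/-- The join `G + H` of two graphs. -/
def graphJoin {α β : Type*} (G : SimpleGraph α) (H : SimpleGraph β) :
    SimpleGraph (α ⊕ β) where
  Adj x y :=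
    match x, y with
    | Sum.inl a, Sum.inl b => G.Adj a b
    | Sum.inr a, Sum.inr b => H.Adj a b
    | Sum.inl _, Sum.inr _ => True
    | Sum.inr _, Sum.inl _ => True
  symm := ⟨by
    rintro (a | a) (b | b) h
    exacts [G.adj_symm h, trivial, trivial, H.adj_symm h]⟩
  loopless := ⟨by
    rintro (a | a) h
    exacts [G.irrefl h, H.irrefl h]⟩

/-- The lexicographic product `G[H]`. -/
def lexProd {α β : Type*} (G : SimpleGraph α) (H : SimpleGraph β) :
    SimpleGraph (α × β) where
  Adj x y := G.Adj x.1 y.1 ∨ (x.1 = y.1 ∧ H.Adj x.2 y.2)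
  symm := ⟨by
    rintro x y (h | ⟨e, h⟩)
    exacts [Or.inl h.symm, Or.inr ⟨e.symm, h.symm⟩]⟩
  loopless := ⟨by
    rintro x (h | ⟨e, h⟩)
    exacts [G.irrefl h, H.irrefl h]⟩

/-- The friendship graph `F_n`: `n` triangles sharing the central vertex `none`. -/
def friendship (n : ℕ) : SimpleGraph (Option (Fin n × Fin 2)) where
  Adj x y := x ≠ y ∧ (x = none ∨ y = none ∨ ∃ i a b, x = some (i, a) ∧ y = some (i, b))
  symm := ⟨by
    rintro x y ⟨hne, h⟩
    refine ⟨hne.symm, ?_⟩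
    rcases h with h | h | ⟨i, a, b, hx, hy⟩
    · exact Or.inr (Or.inl h)
    · exact Or.inl h
    · exact Or.inr (Or.inr ⟨i, b, a, hy, hx⟩)⟩
  loopless := ⟨fun x h => h.1 rfl⟩

/-- The bistar `B_{n,n}`: two adjacent centers, each with `n` leaves. -/
def bistar (n : ℕ) : SimpleGraph (Bool ⊕ Bool × Fin n) where
  Adj x y :=
    match x, y with
    | Sum.inl a, Sum.inl b => a ≠ b
    | Sum.inl a, Sum.inr (c, _) => a = c
    | Sum.inr (c, _), Sum.inl a => a = c
    | Sum.inr _, Sum.inr _ => False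
  symm := ⟨by
    rintro (a | ⟨c, i⟩) (b | ⟨d, j⟩) h
    exacts [h.symm, h, h, h.elim]⟩
  loopless := ⟨by
    rintro (a | ⟨c, i⟩) h
    exacts [h rfl, h]⟩

namespace Stmt15Aux

def enum (a b n : ℕ) : ((Fin a ⊕ Fin b) × Fin n) ≃ Fin (a*n + b*n) :=
  (Equiv.sumProdDistrib (Fin a) (Fin b) (Fin n)).trans
    ((Equiv.sumCongr finProdFinEquiv finProdFinEquiv).trans finSumFinEquiv)

lemma enum_left {a b n : ℕ} (p : Fin a) (j : Fin n) :
    ((enum a b n) (Sum.inl p, j) : ℕ) < a*n := by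
  have h : (enum a b n) (Sum.inl p, j) = Fin.castAdd (b*n) (finProdFinEquiv (p, j)) := by
    simp [enum]
  rw [h, Fin.coe_castAdd]
  exact (finProdFinEquiv (p, j)).isLt

lemma enum_right {a b n : ℕ} (p : Fin b) (j : Fin n) :
    a*n ≤ ((enum a b n) (Sum.inr p, j) : ℕ) := by
  simp [enum]

lemma bij1 (N : ℕ) : Set.BijOn (fun k : Fin N => (k:ℕ)+1) Set.univ (Set.Icc 1 N) := by
  refine ⟨fun k _ => ?_, fun k _ l _ h => by ext; simpa using h, fun m hm => ?_⟩
  · have := k.isLt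
    simp only [Set.mem_Icc]
    omega
  · simp only [Set.mem_Icc] at hm
    exact ⟨⟨m - 1, by omega⟩, Set.mem_univ _, by simp; omega⟩

abbrev auxG (a b n : ℕ) : SimpleGraph ((Fin a ⊕ Fin b) × Fin n) :=
  lexProd (completeBipartiteGraph (Fin a) (Fin b)) (⊥ : SimpleGraph (Fin n))

lemma adj_lr {a b n : ℕ} (p : Fin a) (q : Fin b) (j l : Fin n) :
    (auxG a b n).Adj (Sum.inl p, j) (Sum.inr q, l) := by
  simp [auxG, lexProd]

lemma not_adj_ll {a b n : ℕ} (p q : Fin a) (j l : Fin n) :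
    ¬ (auxG a b n).Adj (Sum.inl p, j) (Sum.inl q, l) := by
  simp [auxG, lexProd]

lemma not_adj_rr {a b n : ℕ} (p q : Fin b) (j l : Fin n) :
    ¬ (auxG a b n).Adj (Sum.inr p, j) (Sum.inr q, l) := by
  simp [auxG, lexProd]


section
variable {a b n : ℕ}

/-- the labeling associated to a permutation of `Fin (a*n+b*n)`. -/
noncomputable def lab (a b n : ℕ) (π : Fin (a*n+b*n) ≃ Fin (a*n+b*n)) :
    ((Fin a ⊕ Fin b) × Fin n) → ℕ :=
  fun v => (π (enum a b n v) : ℕ) + 1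

/-- weight received by left-side vertices -/
noncomputable def WR (a b n : ℕ) (π : Fin (a*n+b*n) ≃ Fin (a*n+b*n)) : ℕ :=
  ∑ k : Fin (a*n+b*n), if a*n ≤ (k:ℕ) then (π k : ℕ) + 1 else 0

/-- weight received by right-side vertices -/
noncomputable def WL (a b n : ℕ) (π : Fin (a*n+b*n) ≃ Fin (a*n+b*n)) : ℕ :=
  ∑ k : Fin (a*n+b*n), if (k:ℕ) < a*n then (π k : ℕ) + 1 else 0

lemma weight_left (π : Fin (a*n+b*n) ≃ Fin (a*n+b*n)) (p : Fin a) (j : Fin n) :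
    ldWeight (auxG a b n) (lab a b n π) (Sum.inl p, j) = WR a b n π := by
  unfold ldWeight WR
  refine Fintype.sum_equiv (enum a b n) _ _ ?_
  rintro ⟨q | q, l⟩
  · rw [if_neg (not_adj_ll p q j l), if_neg (not_le.2 (enum_left q l))]
  · rw [if_pos (adj_lr p q j l), if_pos (enum_right q l)]
    rfl

lemma weight_right (π : Fin (a*n+b*n) ≃ Fin (a*n+b*n)) (p : Fin b) (j : Fin n) :
    ldWeight (auxG a b n) (lab a b n π) (Sum.inr p, j) = WL a b n π := by
  unfold ldWeight WL
  refine Fintype.sum_equiv (enum a b n) _ _ ?_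
  rintro ⟨q | q, l⟩
  · rw [if_pos ((adj_lr q p l j).symm), if_pos (enum_left q l)]
    rfl
  · rw [if_neg (not_adj_rr p q j l), if_neg (not_lt.2 (enum_right q l))]

lemma WL_add_WR (π : Fin (a*n+b*n) ≃ Fin (a*n+b*n)) :
    WL a b n π + WR a b n π = ∑ k ∈ range (a*n+b*n), (k + 1) := by
  unfold WL WR
  rw [← Finset.sum_add_distrib]
  have h1 : ∀ k : Fin (a*n+b*n),
      ((if (k:ℕ) < a*n then (π k : ℕ) + 1 else 0) + (if a*n ≤ (k:ℕ) then (π k : ℕ) + 1 else 0))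
        = (π k : ℕ) + 1 := by
    intro k
    by_cases h : (k:ℕ) < a*n
    · rw [if_pos h, if_neg (not_le.2 h), add_zero]
    · rw [if_neg h, if_pos (not_lt.1 h), zero_add]
  rw [Finset.sum_congr rfl (fun k _ => h1 k), Equiv.sum_comp π (fun k => (k:ℕ)+1),
    Fin.sum_univ_eq_sum_range (fun k => k + 1)]

lemma lab_bijOn (π : Fin (a*n+b*n) ≃ Fin (a*n+b*n)) :
    Set.BijOn (lab a b n π) Set.univ (Set.Icc 1 (a*n+b*n)) := by
  have h1 : Set.BijOn (⇑((enum a b n).trans π)) Set.univ Set.univ :=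
    Set.bijOn_univ.mpr ((enum a b n).trans π).bijective
  exact (bij1 (a*n+b*n)).comp h1

lemma key (ha : 0 < a) (hb : 0 < b) (hn : 0 < n) (π : Fin (a*n+b*n) ≃ Fin (a*n+b*n))
    (hne : WL a b n π ≠ WR a b n π) :
    ∃ f : ((Fin a ⊕ Fin b) × Fin n) → ℕ, IsLDAL (auxG a b n) f ∧
      ((Finset.univ.image (ldWeight (auxG a b n) f)).card = 2) := by
  have hcard : Fintype.card ((Fin a ⊕ Fin b) × Fin n) = a*n+b*n := by
    simp [add_mul]
  refine ⟨lab a b n π, ⟨by rw [hcard]; exact lab_bijOn π, ?_⟩, ?_⟩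
  · rintro ⟨p | p, j⟩ ⟨q | q, l⟩ hadj
    · exact absurd hadj (not_adj_ll p q j l)
    · rw [weight_left, weight_right]; exact hne.symm
    · rw [weight_left, weight_right]; exact hne
    · exact absurd hadj (not_adj_rr p q j l)
  · have himg : Finset.univ.image (ldWeight (auxG a b n) (lab a b n π)) =
        {WR a b n π, WL a b n π} := by
      apply Finset.Subset.antisymm
      · intro w hw
        simp only [Finset.mem_image, Finset.mem_univ, true_and] at hw
        obtain ⟨v, rfl⟩ := hw
        rcases v with ⟨p | p, j⟩
        · rw [weight_left]; exact Finset.mem_insert_self _ _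
        · rw [weight_right]; exact Finset.mem_insert_of_mem (Finset.mem_singleton_self _)
      · intro w hw
        simp only [Finset.mem_insert, Finset.mem_singleton] at hw
        simp only [Finset.mem_image, Finset.mem_univ, true_and]
        rcases hw with rfl | rfl
        · exact ⟨(Sum.inl ⟨0, ha⟩, ⟨0, hn⟩), weight_left π _ _⟩
        · exact ⟨(Sum.inr ⟨0, hb⟩, ⟨0, hn⟩), weight_right π _ _⟩
    rw [himg, Finset.card_pair hne.symm]


lemma WL_refl : WL a b n (Equiv.refl _) = ∑ k ∈ range (a*n), (k + 1) := by
  unfold WL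
  simp only [Equiv.refl_apply]
  rw [Fin.sum_univ_eq_sum_range (fun k => if k < a*n then k + 1 else 0)]
  rw [← Finset.sum_subset (Finset.range_subset_range.2 (Nat.le_add_right _ _))
    (fun x _ hx => if_neg (by simp at hx; omega))]
  exact Finset.sum_congr rfl (fun x hx => if_pos (Finset.mem_range.1 hx))

lemma WL_swap (hA : 0 < a*n) (hAN : a*n < a*n+b*n) :
    WL a b n (Equiv.swap (⟨0, Nat.lt_of_lt_of_le hA (Nat.le_add_right _ _)⟩ : Fin (a*n+b*n))
      ⟨a*n, hAN⟩) = (∑ k ∈ range (a*n), (k + 1)) + a*n := by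
  set z : Fin (a*n+b*n) := ⟨0, Nat.lt_of_lt_of_le hA (Nat.le_add_right _ _)⟩ with hz
  set c : Fin (a*n+b*n) := ⟨a*n, hAN⟩ with hc
  unfold WL
  have step : ∀ k : Fin (a*n+b*n),
      (if (k:ℕ) < a*n then ((Equiv.swap z c k : ℕ) + 1) else 0)
        = (if (k:ℕ) < a*n then (k:ℕ) + 1 else 0) + (if k = z then a*n else 0) := by
    intro k
    by_cases hkz : k = z
    · subst hkz
      rw [Equiv.swap_apply_left, if_pos, if_pos, if_pos rfl]
      · simp only [hz, hc]
        omega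
      · exact hA
      · exact hA
    · by_cases hk : (k:ℕ) < a*n
      · have hkc : k ≠ c := by
          intro h; rw [h] at hk; simp [hc] at hk
        rw [Equiv.swap_apply_of_ne_of_ne hkz hkc, if_neg hkz, add_zero]
      · rw [if_neg hk, if_neg hk, if_neg hkz, add_zero]
  rw [Finset.sum_congr rfl (fun k _ => step k), Finset.sum_add_distrib,
    Finset.sum_ite_eq' Finset.univ z (fun _ => a*n), if_pos (Finset.mem_univ z),
    Fin.sum_univ_eq_sum_range (fun k => if k < a*n then k + 1 else 0)]
  congr 1
  rw [← Finset.sum_subset (Finset.range_subset_range.2 (Nat.le_add_right _ _))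
    (fun x _ hx => if_neg (by simp at hx; omega))]
  exact Finset.sum_congr rfl (fun x hx => if_pos (Finset.mem_range.1 hx))

end
end Stmt15Aux

open Stmt15Aux in
theorem stmt_15 (n a b : ℕ) (hn : 1 < n) (ha : 0 < a) (hb : 0 < b) (hab : a ≠ b) :
    chiLD (lexProd (completeBipartiteGraph (Fin a) (Fin b))
      (⊥ : SimpleGraph (Fin n))) = 2 := by
  have hn' : 0 < n := by omega
  have hA : 0 < a*n := Nat.mul_pos ha hn'
  have hB : 0 < b*n := Nat.mul_pos hb hn'
  have hAN : a*n < a*n+b*n := Nat.lt_add_of_pos_right hB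
  have hex : ∃ f : ((Fin a ⊕ Fin b) × Fin n) → ℕ, IsLDAL (auxG a b n) f ∧
      ((Finset.univ.image (ldWeight (auxG a b n) f)).card = 2) := by
    by_cases h : 2 * (∑ k ∈ range (a*n), (k + 1)) = ∑ k ∈ range (a*n+b*n), (k + 1)
    · refine key ha hb hn' (Equiv.swap ⟨0, Nat.lt_of_lt_of_le hA (Nat.le_add_right _ _)⟩
        ⟨a*n, hAN⟩) ?_
      have ht := WL_add_WR (a := a) (b := b) (n := n)
        (Equiv.swap ⟨0, Nat.lt_of_lt_of_le hA (Nat.le_add_right _ _)⟩ ⟨a*n, hAN⟩)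
      rw [WL_swap hA hAN] at ht ⊢
      intro hEq
      rw [hEq] at ht
      omega
    · refine key ha hb hn' (Equiv.refl _) ?_
      have ht := WL_add_WR (a := a) (b := b) (n := n) (Equiv.refl _)
      rw [WL_refl] at ht ⊢
      intro hEq
      rw [hEq] at ht
      omega
  obtain ⟨f, hf, hcard2⟩ := hex
  have h2 : (2:ℕ) ∈ {k | ∃ f : ((Fin a ⊕ Fin b) × Fin n) → ℕ, IsLDAL (auxG a b n) f ∧
      (Finset.univ.image (ldWeight (auxG a b n) f)).card = k} := ⟨f, hf, hcard2⟩
  have hge : ∀ k ∈ {k | ∃ f : ((Fin a ⊕ Fin b) × Fin n) → ℕ, IsLDAL (auxG a b n) f ∧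
      (Finset.univ.image (ldWeight (auxG a b n) f)).card = k}, 2 ≤ k := by
    rintro k ⟨g, hg, rfl⟩
    have hadj := adj_lr (a := a) (b := b) (n := n) ⟨0, ha⟩ ⟨0, hb⟩ ⟨0, hn'⟩ ⟨0, hn'⟩
    have hne := hg.2 hadj
    exact Finset.one_lt_card.mpr ⟨_, Finset.mem_image_of_mem _ (Finset.mem_univ _),
      _, Finset.mem_image_of_mem _ (Finset.mem_univ _), hne⟩
  exact le_antisymm (Nat.sInf_le h2) (hge _ (Nat.sInf_mem ⟨2, h2⟩))
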